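/- Let v₁,…,v_k be an orthonormal tuple in ℓ² and V₁,…,V_k closed infinite-dimensional pairwise orthogonal subspaces with vᵢ ∈ Vᵢ. Suppose H is a closed subspace such that Hᵢ = Vᵢ ∩ H is infinite-dimensional and π_{Hᵢ}(vᵢ) ≠ 0 for each i. Then there exists ε > 0 such that: for every tuple (v₁',…,v_k') of pairwise orthogonal unit vectors with vᵢ' ∈ Vᵢ and ‖vᵢ' − vᵢ‖ < ε, there exists a tuple (v₁'',…,v_k'') of pairwise orthogonal unit vectors with vᵢ'' − vᵢ ∈ Hᵢ and ‖vᵢ'' − vᵢ‖ = ‖vᵢ' − vᵢ‖ and ⟨vᵢ'', v_j⟩ = ⟨vᵢ', v_j⟩ for all i, j. -/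

import Mathlib

open scoped RealInnerProductSpace

lemma exists_unit_orth {E : Type*} [NormedAddCommGroup E] [InnerProductSpace ℝ E]
    (H : Submodule ℝ E) (hHinf : ¬FiniteDimensional ℝ H)
    (p : E) (hpH : p ∈ H) : ∃ u ∈ H, ‖u‖ = 1 ∧ ⟪u, p⟫ = 0 := by
  have hex : ∃ x ∈ H, x ≠ 0 ∧ ⟪x, p⟫ = 0 := by
    by_contra h
    push_neg at h
    apply hHinf
    have hle : H ≤ Submodule.span ℝ {p} := by
      intro x hx
      set y := x - (⟪x, p⟫ / ‖p‖^2) • p with hy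
      have hyH : y ∈ H := H.sub_mem hx (H.smul_mem _ hpH)
      have hyp : ⟪y, p⟫ = 0 := by
        rcases eq_or_ne p 0 with rfl | hp0
        · simp [hy]
        · have hnp : ‖p‖^2 ≠ 0 := pow_ne_zero _ (norm_ne_zero_iff.mpr hp0)
          rw [hy, inner_sub_left, real_inner_smul_left, real_inner_self_eq_norm_sq]
          field_simp
          ring
      have hy0 : y = 0 := by
        by_contra hne
        exact (h y hyH hne) hyp
      have hxs : x = (⟪x, p⟫ / ‖p‖^2) • p := sub_eq_zero.mp hy0
      rw [hxs]
      exact Submodule.smul_mem _ _ (Submodule.mem_span_singleton_self p)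
    exact Submodule.finiteDimensional_of_le hle
  obtain ⟨x, hxH, hx0, hxp⟩ := hex
  refine ⟨‖x‖⁻¹ • x, H.smul_mem _ hxH, ?_, by simp [real_inner_smul_left, hxp]⟩
  simp [norm_smul, inv_mul_cancel₀ (norm_ne_zero_iff.mpr hx0)]

lemma exists_w {E : Type*} [NormedAddCommGroup E] [InnerProductSpace ℝ E]
    (H : Submodule ℝ E) (hHinf : ¬FiniteDimensional ℝ H)
    (p : E) (hpH : p ∈ H) (hp0 : p ≠ 0) (r c : ℝ) (hr : 0 ≤ r)
    (hc : c^2 ≤ r^2 * ‖p‖^2) :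
    ∃ w ∈ H, ‖w‖ = r ∧ ⟪w, p⟫ = c := by
  obtain ⟨u, huH, hu1, hup⟩ := exists_unit_orth H hHinf p hpH
  have hnp : (0:ℝ) < ‖p‖^2 := pow_pos (norm_pos_iff.mpr hp0) 2
  set a := c / ‖p‖^2 with ha
  set b := Real.sqrt (r^2 - c^2 / ‖p‖^2) with hb
  have hbnn : 0 ≤ r^2 - c^2 / ‖p‖^2 := by
    rw [sub_nonneg, div_le_iff₀ hnp]
    linarith
  refine ⟨a • p + b • u, H.add_mem (H.smul_mem _ hpH) (H.smul_mem _ huH), ?_, ?_⟩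
  · have hpu : ⟪p, u⟫ = 0 := by rw [real_inner_comm]; exact hup
    have hsq : ‖a • p + b • u‖^2 = r^2 := by
      rw [← real_inner_self_eq_norm_sq, inner_add_add_self]
      simp only [real_inner_smul_left, real_inner_smul_right, hup, hpu,
        real_inner_self_eq_norm_sq, norm_smul, mul_pow, sq_abs, hu1,
        Real.norm_eq_abs, mul_zero, zero_mul, add_zero, mul_one]
      rw [Real.sq_sqrt hbnn, ha]
      field_simp
      ring
    calc ‖a • p + b • u‖ = Real.sqrt (‖a • p + b • u‖^2) :=
          (Real.sqrt_sq (norm_nonneg _)).symm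
      _ = Real.sqrt (r^2) := by rw [hsq]
      _ = r := Real.sqrt_sq hr
  · rw [inner_add_left, real_inner_smul_left, real_inner_smul_left, hup,
      real_inner_self_eq_norm_sq, ha]
    field_simp
    ring

/-- Tuple version of the perturbation lemma: for an orthonormal tuple `vᵢ ∈ Vᵢ` in
pairwise orthogonal closed infinite-dimensional subspaces `Vᵢ`, and a closed subspace
`K` with `Hᵢ = Vᵢ ⊓ K` infinite-dimensional and `π_{Hᵢ}(vᵢ) ≠ 0`, there is `ε > 0`
such that every orthonormal tuple `vᵢ' ∈ Vᵢ` with `‖vᵢ' − vᵢ‖ < ε` is matched by an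
orthonormal tuple `vᵢ''` with `vᵢ'' − vᵢ ∈ Hᵢ`, `‖vᵢ'' − vᵢ‖ = ‖vᵢ' − vᵢ‖` and
`⟪vᵢ'', v_j⟫ = ⟪vᵢ', v_j⟫` for all `i, j`. -/
theorem tuple_perturbation {E : Type*} [NormedAddCommGroup E]
    [InnerProductSpace ℝ E] [CompleteSpace E] [TopologicalSpace.SeparableSpace E]
    (hinf : ¬FiniteDimensional ℝ E)
    (k : ℕ) (v : Fin k → E) (hv : Orthonormal ℝ v)
    (V : Fin k → Submodule ℝ E)
    (hVclosed : ∀ i, IsClosed ((V i : Set E)))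
    (hVinf : ∀ i, ¬FiniteDimensional ℝ (V i))
    (hVorth : ∀ i j, i ≠ j → ∀ x ∈ V i, ∀ y ∈ V j, ⟪x, y⟫ = 0)
    (hvV : ∀ i, v i ∈ V i)
    (K : Submodule ℝ E) (hKclosed : IsClosed (K : Set E))
    (hHinf : ∀ i, ¬FiniteDimensional ℝ (V i ⊓ K : Submodule ℝ E))
    (hproj : ∀ i, v i ∉ (V i ⊓ K : Submodule ℝ E)ᗮ) :
    ∃ ε > (0 : ℝ), ∀ v' : Fin k → E,
      (∀ i, ‖v' i‖ = 1) → (∀ i j, i ≠ j → ⟪v' i, v' j⟫ = 0) →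
      (∀ i, v' i ∈ V i) → (∀ i, ‖v' i - v i‖ < ε) →
      ∃ v'' : Fin k → E,
        (∀ i, ‖v'' i‖ = 1) ∧ (∀ i j, i ≠ j → ⟪v'' i, v'' j⟫ = 0) ∧
        (∀ i, v'' i - v i ∈ (V i ⊓ K : Submodule ℝ E)) ∧
        (∀ i, ‖v'' i - v i‖ = ‖v' i - v i‖) ∧
        (∀ i j, ⟪v'' i, v j⟫ = ⟪v' i, v j⟫) := by
  rcases isEmpty_or_nonempty (Fin k) with he | hne
  · exact ⟨1, one_pos, fun v' _ _ _ _ =>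
      ⟨v', fun i => isEmptyElim i, fun i => isEmptyElim i, fun i => isEmptyElim i,
        fun i => isEmptyElim i, fun i => isEmptyElim i⟩⟩
  set H : Fin k → Submodule ℝ E := fun i => V i ⊓ K with hH
  haveI hcomp : ∀ i, CompleteSpace (H i) := by
    intro i
    have : IsClosed ((H i : Set E)) := by
      rw [hH]
      exact (hVclosed i).inter hKclosed
    exact this.completeSpace_coe
  set p : Fin k → E := fun i => (Submodule.orthogonalProjectionOnto (H i) (v i) : E) with hp
  have hp0 : ∀ i, p i ≠ 0 := by
    intro i hpi
    apply hproj i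
    rw [← Submodule.orthogonalProjectionOnto_eq_zero_iff (K := H i)]
    exact Subtype.coe_injective hpi
  refine ⟨Finset.univ.inf' Finset.univ_nonempty (fun i => 2 * ‖p i‖), ?_, ?_⟩
  · simp only [gt_iff_lt, Finset.lt_inf'_iff]
    intro i _
    have := norm_pos_iff.mpr (hp0 i)
    linarith
  intro v' hv'1 hv'orth hv'V hv'close
  have key : ∀ i, ∃ w, w ∈ H i ∧ ‖w‖ = ‖v' i - v i‖ ∧ ⟪w, v i⟫ = ⟪v' i - v i, v i⟫ := by
    intro i
    have hri : ‖v' i - v i‖ < 2 * ‖p i‖ :=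
      lt_of_lt_of_le (hv'close i) (Finset.inf'_le _ (Finset.mem_univ i))
    set r := ‖v' i - v i‖ with hr
    set c := ⟪v' i - v i, v i⟫ with hcdef
    have hvi1 : ‖v i‖ = 1 := hv.1 i
    have hcval : c = -(r^2) / 2 := by
      have h1 : r^2 = ‖v' i‖^2 - 2 * ⟪v' i, v i⟫ + ‖v i‖^2 := by
        rw [hr, norm_sub_sq_real]
      have h2 : c = ⟪v' i, v i⟫ - ⟪v i, v i⟫ := by rw [hcdef, inner_sub_left]
      rw [real_inner_self_eq_norm_sq, hvi1, hv'1 i] at *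
      linarith
    have hc : c^2 ≤ r^2 * ‖p i‖^2 := by
      have hr0 : (0:ℝ) ≤ r := norm_nonneg _
      have h4 : r^2 ≤ (2 * ‖p i‖)^2 := by nlinarith
      nlinarith [mul_le_mul_of_nonneg_left h4 (sq_nonneg r)]
    obtain ⟨w, hwH, hwn, hwp⟩ := exists_w (H i) (hHinf i) (p i)
      (Submodule.orthogonalProjectionOnto (H i) (v i)).2 (hp0 i) r c (norm_nonneg _) hc
    refine ⟨w, hwH, hwn, ?_⟩
    have horth : ⟪v i - p i, w⟫ = 0 :=
      Submodule.starProjection_inner_eq_zero (K := H i) (v i) w hwH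
    have : ⟪w, v i - p i⟫ = 0 := by rw [real_inner_comm]; exact horth
    rw [inner_sub_right] at this
    linarith
  choose w hwH hwn hwv using key
  have hwV : ∀ i, w i ∈ V i := fun i => ((Submodule.mem_inf.mp (hwH i)).1)
  refine ⟨fun i => v i + w i, ?_, ?_, ?_, ?_, ?_⟩
  · intro i
    have hvi1 : ‖v i‖ = 1 := hv.1 i
    have hsq : ‖v i + w i‖^2 = 1 := by
      rw [norm_add_sq_real, hvi1, hwn i]
      have h1 : ⟪v i, w i⟫ = ⟪v' i - v i, v i⟫ := by
        rw [real_inner_comm]; exact hwv i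
      have h2 : ‖v' i - v i‖^2 = ‖v' i‖^2 - 2 * ⟪v' i, v i⟫ + ‖v i‖^2 :=
        norm_sub_sq_real _ _
      rw [hv'1 i, hvi1] at h2
      have h3 : ⟪v' i - v i, v i⟫ = ⟪v' i, v i⟫ - ⟪v i, v i⟫ := inner_sub_left _ _ _
      rw [real_inner_self_eq_norm_sq, hvi1] at h3
      rw [h1, h3, h2]
      ring
    calc ‖v i + w i‖ = Real.sqrt (‖v i + w i‖^2) := (Real.sqrt_sq (norm_nonneg _)).symm
      _ = 1 := by rw [hsq]; exact Real.sqrt_one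
  · intro i j hij
    exact hVorth i j hij _ ((V i).add_mem (hvV i) (hwV i)) _ ((V j).add_mem (hvV j) (hwV j))
  · intro i
    simpa [hH] using hwH i
  · intro i
    simpa using hwn i
  · intro i j
    rcases eq_or_ne i j with rfl | hij
    · rw [inner_add_left, hwv i]
      rw [inner_sub_left]
      ring
    · rw [hVorth i j hij _ ((V i).add_mem (hvV i) (hwV i)) _ (hvV j),
        hVorth i j hij _ (hv'V i) _ (hvV j)]
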